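/- Let p ≥ 2 be a real number and let ρ > 1 be a real number. Then ∫₀^π sin^{p−2}(ξ) / (1 + ρ² − 2ρ·cos ξ)^{p/2} dξ = (1 / (ρ^{p−2}(ρ² − 1))) · ∫₀^π sin^{p−2}(ξ) dξ. -/

import Mathlib

open Real MeasureTheory

/-- For real `p ≥ 2` and `ρ > 1`,
`∫₀^π sin^{p−2} ξ / (1 + ρ² − 2ρ cos ξ)^{p/2} dξ
  = (1/(ρ^{p−2}(ρ²−1))) ∫₀^π sin^{p−2} ξ dξ`. -/
theorem landkof_integral (p ρ : ℝ) (hp : 2 ≤ p) (hρ : 1 < ρ) :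
    (∫ ξ in (0:ℝ)..π, Real.sin ξ ^ (p - 2) / (1 + ρ^2 - 2*ρ*Real.cos ξ) ^ (p/2))
      = 1 / (ρ ^ (p - 2) * (ρ^2 - 1)) * ∫ ξ in (0:ℝ)..π, Real.sin ξ ^ (p - 2) := by
  have hρ0 : (0:ℝ) < ρ := by linarith
  have hρ1 : (0:ℝ) < ρ^2 - 1 := by nlinarith
  -- basic facts about S β := √(ρ² - sin² β)
  set S : ℝ → ℝ := fun β => Real.sqrt (ρ^2 - Real.sin β ^ 2) with hSdef
  have hSnn : ∀ β, 0 ≤ ρ^2 - Real.sin β ^ 2 := by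
    intro β; nlinarith [Real.sin_sq_le_one β]
  have hSsq : ∀ β, S β ^ 2 = ρ^2 - Real.sin β ^ 2 := by
    intro β; rw [hSdef]; exact Real.sq_sqrt (hSnn β)
  have hSpos : ∀ β, 0 < S β := by
    intro β; rw [hSdef]; apply Real.sqrt_pos.mpr; nlinarith [Real.sin_sq_le_one β]
  have hprod : ∀ β, (S β + Real.cos β) * (S β - Real.cos β) = ρ^2 - 1 := by
    intro β
    linear_combination hSsq β - Real.sin_sq_add_cos_sq β
  have hScpos : ∀ β, 0 < S β + Real.cos β := by
    intro β
    nlinarith [hSsq β, hSpos β, Real.sin_sq_add_cos_sq β, hprod β]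
  have hScpos' : ∀ β, 0 < S β - Real.cos β := by
    intro β
    nlinarith [hSpos β, hScpos β, hprod β]
  have hScont : Continuous S := by
    rw [hSdef]
    exact (continuous_const.sub (Real.continuous_sin.pow 2)).sqrt
  -- the substitution map
  set g : ℝ → ℝ := fun β => π - β - Real.arcsin (Real.sin β / ρ) with hgdef
  -- the integrand
  set F : ℝ → ℝ := fun ξ => Real.sin ξ ^ (p - 2) / (1 + ρ^2 - 2*ρ*Real.cos ξ) ^ (p/2)
    with hFdef
  have hD : ∀ ξ, 0 < 1 + ρ^2 - 2*ρ*Real.cos ξ := by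
    intro ξ; nlinarith [Real.cos_le_one ξ, Real.neg_one_le_cos ξ]
  have hFcont : Continuous F := by
    rw [hFdef]
    apply Continuous.div
    · exact Real.continuous_sin.rpow_const (fun x => Or.inr (by linarith))
    · exact (by continuity : Continuous fun ξ => 1 + ρ^2 - 2*ρ*Real.cos ξ).rpow_const
        (fun x => Or.inl (hD x).ne')
    · exact fun x => (Real.rpow_pos_of_pos (hD x) _).ne'
  have hratio1 : ∀ x : ℝ, -1 < Real.sin x / ρ := by
    intro x; rw [lt_div_iff₀ hρ0]; nlinarith [Real.neg_one_le_sin x]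
  have hratio2 : ∀ x : ℝ, Real.sin x / ρ < 1 := by
    intro x; rw [div_lt_one hρ0]; nlinarith [Real.sin_le_one x]
  have hsqrtS : ∀ x : ℝ, Real.sqrt (1 - (Real.sin x / ρ)^2) = S x / ρ := by
    intro x
    rw [show 1 - (Real.sin x / ρ)^2 = (ρ^2 - Real.sin x ^ 2) / ρ^2 by
      field_simp]
    rw [Real.sqrt_div (hSnn x), Real.sqrt_sq hρ0.le]
  have hderiv : ∀ x ∈ Set.uIcc (0:ℝ) π,
      HasDerivAt g (-1 - Real.cos x / S x) x := by
    intro x _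
    have h1 : HasDerivAt (fun β => Real.sin β / ρ) (Real.cos x / ρ) x :=
      (Real.hasDerivAt_sin x).div_const ρ
    have h2 := (Real.hasDerivAt_arcsin (hratio1 x).ne' (hratio2 x).ne).comp x h1
    have h4 : HasDerivAt (fun β : ℝ => π - β) (-1) x := (hasDerivAt_id x).const_sub π
    have h5 := h4.sub h2
    have hSne : S x ≠ 0 := (hSpos x).ne'
    have hρne : ρ ≠ 0 := hρ0.ne'
    have : -1 - 1 / Real.sqrt (1 - (Real.sin x / ρ)^2) * (Real.cos x / ρ)
        = -1 - Real.cos x / S x := by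
      rw [hsqrtS x]
      field_simp
    rw [hgdef]
    rw [← this]
    exact h5
  have hg'cont : ContinuousOn (fun x => -1 - Real.cos x / S x) (Set.uIcc (0:ℝ) π) :=
    (continuous_const.sub (Real.continuous_cos.div hScont
      (fun x => (hSpos x).ne'))).continuousOn
  have hsub := intervalIntegral.integral_comp_smul_deriv hderiv hg'cont hFcont
  have hg0 : g 0 = π := by
    rw [hgdef]; simp
  have hgπ : g π = 0 := by
    rw [hgdef]; simp
  rw [hg0, hgπ] at hsub
  -- pointwise identity for the substituted integrand
  have hpt : Set.EqOn (fun β => (-1 - Real.cos β / S β) • F (g β))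
      (fun β => -(Real.sin β ^ (p-2) / (ρ^(p-2) * (S β * (S β + Real.cos β)))))
      (Set.uIcc (0:ℝ) π) := by
    intro β hβ
    rw [Set.uIcc_of_le Real.pi_pos.le] at hβ
    have hsb : 0 ≤ Real.sin β := Real.sin_nonneg_of_nonneg_of_le_pi hβ.1 hβ.2
    have hα1 : Real.sin (Real.arcsin (Real.sin β / ρ)) = Real.sin β / ρ :=
      Real.sin_arcsin (hratio1 β).le (hratio2 β).le
    have hα2 : Real.cos (Real.arcsin (Real.sin β / ρ)) = S β / ρ := by
      rw [Real.cos_arcsin, hsqrtS β]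
    have hsin_g : Real.sin (g β) = Real.sin β * (S β + Real.cos β) / ρ := by
      rw [hgdef]
      show Real.sin (π - β - Real.arcsin (Real.sin β / ρ)) = _
      rw [show π - β - Real.arcsin (Real.sin β / ρ)
          = π - (β + Real.arcsin (Real.sin β / ρ)) by ring]
      rw [Real.sin_pi_sub, Real.sin_add, hα1, hα2]
      field_simp
    have hcos_g : Real.cos (g β) = (Real.sin β ^ 2 - Real.cos β * S β) / ρ := by
      rw [hgdef]
      show Real.cos (π - β - Real.arcsin (Real.sin β / ρ)) = _
      rw [show π - β - Real.arcsin (Real.sin β / ρ)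
          = π - (β + Real.arcsin (Real.sin β / ρ)) by ring]
      rw [Real.cos_pi_sub, Real.cos_add, hα1, hα2]
      field_simp
      ring
    have hden_g : 1 + ρ^2 - 2*ρ*Real.cos (g β) = (S β + Real.cos β)^2 := by
      have e : 2*ρ*((Real.sin β ^ 2 - Real.cos β * S β)/ρ)
          = 2*(Real.sin β ^ 2 - Real.cos β * S β) := by
        field_simp
      rw [hcos_g, e]
      linear_combination (-1 : ℝ) * hSsq β - Real.sin_sq_add_cos_sq β
    have hXpos := hScpos β
    have hpow2 : ((S β + Real.cos β)^2 : ℝ) ^ (p/2)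
        = (S β + Real.cos β)^(p-2) * ((S β + Real.cos β) * (S β + Real.cos β)) := by
      rw [← Real.rpow_natCast (S β + Real.cos β) 2, ← Real.rpow_mul hXpos.le]
      rw [show ((2:ℕ):ℝ) * (p/2) = (p-2) + 1 + 1 by push_cast; ring]
      rw [Real.rpow_add hXpos, Real.rpow_add hXpos, Real.rpow_one]
      ring
    have hnum : (Real.sin β * (S β + Real.cos β) / ρ) ^ (p-2)
        = Real.sin β ^ (p-2) * (S β + Real.cos β)^(p-2) / ρ ^ (p-2) := by
      rw [Real.div_rpow (mul_nonneg hsb hXpos.le) hρ0.le,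
        Real.mul_rpow hsb hXpos.le]
    have hFg : F (g β) = Real.sin β ^ (p-2) * (S β + Real.cos β)^(p-2) / ρ ^ (p-2)
        / ((S β + Real.cos β)^(p-2) * ((S β + Real.cos β) * (S β + Real.cos β))) := by
      rw [hFdef]
      show Real.sin (g β) ^ (p-2) / (1 + ρ^2 - 2*ρ*Real.cos (g β)) ^ (p/2) = _
      rw [hsin_g, hden_g, hpow2, hnum]
    show (-1 - Real.cos β / S β) • F (g β) = _
    rw [hFg, smul_eq_mul]
    have hB : ((S β + Real.cos β)^(p-2) : ℝ) ≠ 0 := (Real.rpow_pos_of_pos hXpos _).ne'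
    have hρp : (ρ ^ (p-2) : ℝ) ≠ 0 := (Real.rpow_pos_of_pos hρ0 _).ne'
    have hSne : S β ≠ 0 := (hSpos β).ne'
    have hXne : S β + Real.cos β ≠ 0 := hXpos.ne'
    field_simp
    ring
  simp only [Function.comp] at hsub
  rw [intervalIntegral.integral_congr hpt, intervalIntegral.integral_symm 0 π] at hsub
  -- so ∫ F = ∫ sin^{p-2} / (ρ^{p-2} S (S + cos))
  have hmain : (∫ ξ in (0:ℝ)..π, F ξ)
      = ∫ β in (0:ℝ)..π, Real.sin β ^ (p-2) / (ρ^(p-2) * (S β * (S β + Real.cos β))) := by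
    have := hsub
    rw [intervalIntegral.integral_neg] at this
    linarith [this]
  -- symmetry β ↦ π - β
  have hsym : (∫ β in (0:ℝ)..π, Real.sin β ^ (p-2) / (S β * (S β + Real.cos β)))
      = ∫ β in (0:ℝ)..π, Real.sin β ^ (p-2) / (S β * (S β - Real.cos β)) := by
    have h := intervalIntegral.integral_comp_sub_left
      (fun β => Real.sin β ^ (p-2) / (S β * (S β - Real.cos β))) π
      (a := 0) (b := π)
    simp only [sub_self, sub_zero] at h
    rw [← h]
    apply intervalIntegral.integral_congr
    intro x _
    simp only [hSdef, Real.sin_pi_sub, Real.cos_pi_sub]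
    ring_nf
  -- integrability facts
  have hnumcont : Continuous fun β => Real.sin β ^ (p-2) :=
    Real.continuous_sin.rpow_const (fun x => Or.inr (by linarith))
  have hi1 : IntervalIntegrable
      (fun β => Real.sin β ^ (p-2) / (S β * (S β + Real.cos β))) volume 0 π := by
    apply Continuous.intervalIntegrable
    exact hnumcont.div (hScont.mul (hScont.add Real.continuous_cos))
      (fun x => (mul_pos (hSpos x) (hScpos x)).ne')
  have hi2 : IntervalIntegrable
      (fun β => Real.sin β ^ (p-2) / (S β * (S β - Real.cos β))) volume 0 π := by
    apply Continuous.intervalIntegrable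
    exact hnumcont.div (hScont.mul (hScont.sub Real.continuous_cos))
      (fun x => (mul_pos (hSpos x) (hScpos' x)).ne')
  -- add the two symmetric integrals
  have hsum : (∫ β in (0:ℝ)..π, Real.sin β ^ (p-2) / (S β * (S β + Real.cos β)))
      = 1 / (ρ^2 - 1) * ∫ β in (0:ℝ)..π, Real.sin β ^ (p-2) := by
    have hadd : (∫ β in (0:ℝ)..π, Real.sin β ^ (p-2) / (S β * (S β + Real.cos β)))
        + (∫ β in (0:ℝ)..π, Real.sin β ^ (p-2) / (S β * (S β - Real.cos β)))
        = ∫ β in (0:ℝ)..π, (2 / (ρ^2-1)) * Real.sin β ^ (p-2) := by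
      rw [← intervalIntegral.integral_add hi1 hi2]
      apply intervalIntegral.integral_congr
      intro x _
      have hS0 : S x ≠ 0 := (hSpos x).ne'
      have hp1 : S x + Real.cos x ≠ 0 := (hScpos x).ne'
      have hp2 : S x - Real.cos x ≠ 0 := (hScpos' x).ne'
      have hq : ρ^2 - 1 ≠ 0 := hρ1.ne'
      field_simp
      linear_combination (-2 * Real.sin x ^ (p-2) * S x) * hprod x
    rw [← hsym] at hadd
    rw [intervalIntegral.integral_const_mul] at hadd
    have : (2:ℝ) * (∫ β in (0:ℝ)..π, Real.sin β ^ (p-2) / (S β * (S β + Real.cos β)))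
        = 2 / (ρ^2-1) * ∫ β in (0:ℝ)..π, Real.sin β ^ (p-2) := by linarith
    have hne : (ρ^2-1) ≠ 0 := hρ1.ne'
    field_simp at this ⊢
    linarith
  -- put everything together
  have hconst : (∫ β in (0:ℝ)..π,
      Real.sin β ^ (p-2) / (ρ^(p-2) * (S β * (S β + Real.cos β))))
      = (1 / ρ^(p-2)) * ∫ β in (0:ℝ)..π,
        Real.sin β ^ (p-2) / (S β * (S β + Real.cos β)) := by
    rw [← intervalIntegral.integral_const_mul]
    apply intervalIntegral.integral_congr
    intro x _
    have hρp : (ρ ^ (p-2) : ℝ) ≠ 0 := (Real.rpow_pos_of_pos hρ0 _).ne'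
    have hS0 : S x ≠ 0 := (hSpos x).ne'
    have hp1 : S x + Real.cos x ≠ 0 := (hScpos x).ne'
    field_simp
  have hρp : (0:ℝ) < ρ ^ (p-2) := Real.rpow_pos_of_pos hρ0 _
  calc (∫ ξ in (0:ℝ)..π, F ξ)
      = (1 / ρ^(p-2)) * (1 / (ρ^2 - 1) * ∫ β in (0:ℝ)..π, Real.sin β ^ (p-2)) := by
        rw [hmain, hconst, hsum]
    _ = 1 / (ρ ^ (p - 2) * (ρ^2 - 1)) * ∫ ξ in (0:ℝ)..π, Real.sin ξ ^ (p - 2) := by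
        rw [← mul_assoc]
        congr 1
        field_simp
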